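/- Let 0 = r_0 < r_1 < ... < r_n be real numbers. For each k with 1 \le k \le n, t^{r_k} = \sum_{j=k}^{n} p_j H^n_{j,\Lambda}(t) for all t \in (0,1], where p_j = \prod_{i=j+1}^{n} (1 - r_k/r_i) for k \le j \le n-1 and p_n = 1. -/

import Mathlib

/-- The divided difference `[x 0, ..., x n] f` at pairwise distinct points,
given by the explicit formula `∑ i, f (x i) / ∏_{j ≠ i} (x i - x j)`. -/
noncomputable def divSum (n : ℕ) (x : Fin (n+1) → ℝ) (f : ℝ → ℝ) : ℝ :=
  ∑ i : Fin (n+1), f (x i) / ∏ j ∈ Finset.univ.erase i, (x i - x j)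


/-- The Gelfond-Bernstein basis function `H^n_{k,Λ}` associated with the sequence
`Λ = (r 0, ..., r n)`: `H^n_k (t) = (-1)^(n-k) r_{k+1} ⋯ r_n [r_k, ..., r_n] f_t`
for `k ≤ n-1` and `H^n_n (t) = t ^ (r n)`, where `f_t x = t ^ x` (real power). -/
noncomputable def GB (n : ℕ) (r : Fin (n+1) → ℝ) (k : Fin (n+1)) (t : ℝ) : ℝ :=
  if k.val = n then t ^ (r k)
  else (-1 : ℝ) ^ (n - k.val) * (∏ j ∈ Finset.Ioi k, r j) *
    divSum (n - k.val)
      (fun i => r ⟨k.val + i.val, by have h1 := i.isLt; have h2 := k.isLt; omega⟩)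
      (fun x => t ^ x)

lemma divSum_shift (n : ℕ) (j : Fin (n+1)) (r : Fin (n+1) → ℝ) (f : ℝ → ℝ) :
    divSum (n - j.val) (fun i => r ⟨j.val + i.val, by have := i.isLt; have := j.isLt; omega⟩) f
      = ∑ i ∈ Finset.Ici j, f (r i) / ∏ l ∈ (Finset.Ici j).erase i, (r i - r l) := by
  unfold divSum
  have hj := j.isLt
  refine Finset.sum_nbij'
    (i := fun a : Fin (n - j.val + 1) => (⟨j.val + a.val, by have := a.isLt; omega⟩ : Fin (n+1)))
    (j := fun b : Fin (n+1) => (⟨b.val - j.val, by have := b.isLt; omega⟩ : Fin (n - j.val + 1)))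
    ?_ ?_ ?_ ?_ ?_
  · intro a _
    simp [Finset.mem_Ici, Fin.le_def]
  · intro b _
    simp
  · intro a _
    ext
    simp
  · intro b hb
    simp only [Finset.mem_Ici, Fin.le_def] at hb
    ext
    simp
    omega
  · intro a _
    congr 1
    refine Finset.prod_nbij'
      (i := fun l : Fin (n - j.val + 1) => (⟨j.val + l.val, by have := l.isLt; omega⟩ : Fin (n+1)))
      (j := fun b : Fin (n+1) => (⟨b.val - j.val, by have := b.isLt; omega⟩ : Fin (n - j.val + 1)))
      ?_ ?_ ?_ ?_ ?_
    · intro l hl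
      simp only [Finset.mem_erase, Finset.mem_univ, and_true, ne_eq, Fin.ext_iff] at hl ⊢
      simp only [Finset.mem_Ici, Fin.le_def]
      constructor
      · intro h; exact hl (by omega)
      · omega
    · intro b hb
      simp only [Finset.mem_erase, Finset.mem_Ici, Fin.le_def, Fin.ext_iff, ne_eq] at hb ⊢
      simp only [Finset.mem_univ, and_true]
      omega
    · intro l _
      ext; simp
    · intro b hb
      simp only [Finset.mem_erase, Finset.mem_Ici, Fin.le_def] at hb
      ext; simp; omega
    · intro l _
      rfl

lemma GB_eq (n : ℕ) (r : Fin (n+1) → ℝ) (j : Fin (n+1)) (t : ℝ) :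
    GB n r j t = (-1 : ℝ) ^ (n - j.val) * (∏ l ∈ Finset.Ioi j, r l) *
      ∑ i ∈ Finset.Ici j, t ^ (r i) / ∏ l ∈ (Finset.Ici j).erase i, (r i - r l) := by
  unfold GB
  by_cases h : j.val = n
  · have hlast : j = Fin.last n := by ext; simpa using h
    subst hlast
    have h1 : Finset.Ioi (Fin.last n) = ∅ := by
      ext l; simp only [Finset.mem_Ioi, Finset.notMem_empty, iff_false, not_lt]
      exact Fin.le_last l
    have h2 : Finset.Ici (Fin.last n) = {Fin.last n} := by
      ext l; simp only [Finset.mem_Ici, Finset.mem_singleton]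
      exact ⟨fun h => le_antisymm (Fin.le_last l) h, fun h => h ▸ le_refl _⟩
    rw [if_pos h, h1, h2]
    simp
  · rw [if_neg h, divSum_shift]

lemma sum_Icc_range (n : ℕ) (k i : Fin (n+1)) (h : k ≤ i) (F : Fin (n+1) → ℝ) :
    ∑ j ∈ Finset.Icc k i, F j
      = ∑ m ∈ Finset.range (i.val - k.val + 1), F ⟨min (k.val + m) n, by omega⟩ := by
  have hi := i.isLt
  refine Finset.sum_nbij' (i := fun j : Fin (n+1) => j.val - k.val)
    (j := fun m : ℕ => (⟨min (k.val + m) n, by omega⟩ : Fin (n+1))) ?_ ?_ ?_ ?_ ?_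
  · intro a ha
    simp only [Finset.mem_Icc, Fin.le_def] at ha
    simp only [Finset.mem_range]
    omega
  · intro m hm
    simp only [Finset.mem_range] at hm
    simp only [Finset.mem_Icc, Fin.le_def] at h ⊢
    omega
  · intro a ha
    simp only [Finset.mem_Icc, Fin.le_def] at ha
    ext
    simp only
    omega
  · intro m hm
    simp only [Finset.mem_range] at hm
    simp only [Fin.le_def] at h
    show min (k.val + m) n - k.val = m
    omega
  · intro a ha
    simp only [Finset.mem_Icc, Fin.le_def] at ha
    congr 1
    ext
    simp only
    omega

lemma innerGB_sum (n : ℕ) (r : Fin (n+1) → ℝ) (hr : StrictMono r) (k i : Fin (n+1)) (hki : k ≤ i) :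
    ∑ j ∈ Finset.Icc k i,
        (∏ l ∈ Finset.Ioi j, (r k - r l)) / (∏ l ∈ (Finset.Ici j).erase i, (r i - r l))
      = if i = k then 1 else 0 := by
  have hi := i.isLt
  set C : Fin (n+1) → ℝ := fun j =>
    (∏ l ∈ Finset.Ioi j, (r k - r l)) / (∏ l ∈ (Finset.Ici j).erase i, (r i - r l)) with hC
  set P : Fin (n+1) → ℝ := fun j =>
    (∏ l ∈ (Finset.Ici j).erase i, (r k - r l)) / (∏ l ∈ (Finset.Ici j).erase i, (r i - r l))
    with hP
  have hden : ∀ j : Fin (n+1), (∏ l ∈ (Finset.Ici j).erase i, (r i - r l)) ≠ 0 := by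
    intro j
    rw [Finset.prod_ne_zero_iff]
    intro l hl
    have : l ≠ i := (Finset.mem_erase.mp hl).1
    exact sub_ne_zero_of_ne (fun h => this (hr.injective h.symm))
  by_cases hik : i = k
  · subst hik
    rw [if_pos rfl, Finset.Icc_self, Finset.sum_singleton, Finset.Ici_erase]
    exact div_self (by simpa [Finset.Ici_erase] using hden i)
  · rw [if_neg hik]
    have hki' : k.val < i.val := lt_of_le_of_ne (Fin.le_def.mp hki) (fun h => hik (Fin.ext h.symm))
    -- C i = P i
    have hCi : C i = P i := by
      simp only [hC, hP, Finset.Ici_erase]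
    -- P k = 0
    have hPk : P k = 0 := by
      have hkmem : k ∈ (Finset.Ici k).erase i := by
        simp only [Finset.mem_erase, Finset.mem_Ici]
        exact ⟨fun h => hik (h.symm), le_refl k⟩
      simp only [hP]
      rw [Finset.prod_eq_zero hkmem (by ring), zero_div]
    -- step
    have hstep : ∀ j : Fin (n+1), ∀ _hjv : j.val < i.val, C j = P j - P ⟨j.val + 1, by omega⟩ := by
      intro j hjv
      set j' : Fin (n+1) := ⟨j.val + 1, by omega⟩ with hj'
      have hIoi : Finset.Ioi j = Finset.Ici j' := by
        ext l
        simp only [Finset.mem_Ioi, Finset.mem_Ici, Fin.lt_def, Fin.le_def, hj']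
        omega
      have himem : i ∈ Finset.Ici j' := by
        simp only [Finset.mem_Ici, Fin.le_def, hj']
        omega
      have hset : (Finset.Ici j).erase i = insert j ((Finset.Ici j').erase i) := by
        ext l
        simp only [Finset.mem_erase, Finset.mem_insert, Finset.mem_Ici, Fin.le_def, hj',
          Fin.ext_iff, ne_eq]
        omega
      have hjnot : j ∉ (Finset.Ici j').erase i := by
        simp only [Finset.mem_erase, Finset.mem_Ici, Fin.le_def, hj']
        omega
      set a : ℝ := ∏ l ∈ (Finset.Ici j').erase i, (r k - r l) with ha
      set b : ℝ := ∏ l ∈ (Finset.Ici j').erase i, (r i - r l) with hb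
      have hb0 : b ≠ 0 := hden j'
      have hnum : (∏ l ∈ Finset.Ioi j, (r k - r l)) = (r k - r i) * a := by
        rw [hIoi, ← Finset.mul_prod_erase _ _ himem]
      have hnum2 : (∏ l ∈ (Finset.Ici j).erase i, (r k - r l)) = (r k - r j) * a := by
        rw [hset, Finset.prod_insert hjnot]
      have hden2 : (∏ l ∈ (Finset.Ici j).erase i, (r i - r l)) = (r i - r j) * b := by
        rw [hset, Finset.prod_insert hjnot]
      have hrij : r i - r j ≠ 0 := sub_ne_zero_of_ne (hr (Fin.lt_def.mpr hjv)).ne'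
      simp only [hC, hP, hnum, hnum2, hden2]
      field_simp
      simp only [← ha, ← hb]
      field_simp
      ring
    -- telescoping
    rw [sum_Icc_range n k i hki]
    set d := i.val - k.val with hd
    have hQpf : ∀ m : ℕ, min (k.val + m) n < n + 1 := fun m => by omega
    set Q : ℕ → ℝ := fun m => P ⟨min (k.val + m) n, hQpf m⟩ with hQ
    have hrange : ∀ m ∈ Finset.range d,
        C ⟨min (k.val + m) n, by omega⟩ = Q m - Q (m+1) := by
      intro m hm
      simp only [Finset.mem_range] at hm
      have e1 : (⟨min (k.val + m) n, by omega⟩ : Fin (n+1)) = ⟨k.val + m, by omega⟩ := by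
        ext; simp; omega
      have e2 : (⟨min (k.val + (m+1)) n, hQpf (m+1)⟩ : Fin (n+1)) = ⟨k.val + m + 1, by omega⟩ := by
        ext; simp; omega
      simp only [hQ]
      rw [e1, e2]
      exact hstep ⟨k.val + m, by omega⟩ (by simp; omega)
    have hlast : (⟨min (k.val + d) n, by omega⟩ : Fin (n+1)) = i := by
      ext; simp; omega
    have hQ0 : Q 0 = P k := by
      have e : (⟨min (k.val + 0) n, hQpf 0⟩ : Fin (n+1)) = k := by
        ext; show min (k.val + 0) n = k.val; omega
      simp only [hQ, e]
    have hQd : Q d = P i := by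
      have e : (⟨min (k.val + d) n, hQpf d⟩ : Fin (n+1)) = i := by
        ext; show min (k.val + d) n = i.val; omega
      simp only [hQ, e]
    rw [Finset.sum_range_succ, Finset.sum_congr rfl hrange, Finset.sum_range_sub' Q d, hlast]
    have hCi' : (∏ l ∈ Finset.Ioi i, (r k - r l)) / ∏ l ∈ (Finset.Ici i).erase i, (r i - r l)
        = P i := hCi
    rw [hCi', hQ0, hQd, hPk]
    ring

lemma swapGB_sum (n : ℕ) (k : Fin (n+1)) (F : Fin (n+1) → Fin (n+1) → ℝ) :
    ∑ j ∈ Finset.Ici k, ∑ i ∈ Finset.Ici j, F j i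
      = ∑ i ∈ Finset.Ici k, ∑ j ∈ Finset.Icc k i, F j i := by
  have e1 : ∀ (c : Fin (n+1)) (g : Fin (n+1) → ℝ),
      ∑ i ∈ Finset.Ici c, g i = ∑ i : Fin (n+1), if c ≤ i then g i else 0 := by
    intro c g
    rw [← Finset.sum_filter]
    congr 1
    ext x
    simp
  have e2 : ∀ (c : Fin (n+1)) (g : Fin (n+1) → ℝ),
      ∑ j ∈ Finset.Icc k c, g j = ∑ j : Fin (n+1), if k ≤ j ∧ j ≤ c then g j else 0 := by
    intro c g
    rw [← Finset.sum_filter]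
    congr 1
    ext x
    simp [Finset.mem_Icc]
  calc ∑ j ∈ Finset.Ici k, ∑ i ∈ Finset.Ici j, F j i
      = ∑ j : Fin (n+1), ∑ i : Fin (n+1), if k ≤ j ∧ j ≤ i then F j i else 0 := by
        rw [e1 k]
        apply Finset.sum_congr rfl
        intro j _
        by_cases h : k ≤ j
        · rw [if_pos h, e1 j]
          apply Finset.sum_congr rfl
          intro i _
          by_cases h2 : j ≤ i <;> simp [h, h2]
        · rw [if_neg h]
          symm
          apply Finset.sum_eq_zero
          intro i _
          rw [if_neg (fun hh => h hh.1)]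
    _ = ∑ i : Fin (n+1), ∑ j : Fin (n+1), if k ≤ j ∧ j ≤ i then F j i else 0 :=
        Finset.sum_comm
    _ = ∑ i ∈ Finset.Ici k, ∑ j ∈ Finset.Icc k i, F j i := by
        rw [e1 k]
        apply Finset.sum_congr rfl
        intro i _
        by_cases h : k ≤ i
        · rw [if_pos h, e2 i]
        · rw [if_neg h]
          apply Finset.sum_eq_zero
          intro j _
          rw [if_neg (fun hh => h (hh.1.trans hh.2))]

/-- Gelfond-Bernstein control points of the monomial t ^ (r k): for 1 <= k <= n,
t ^ (r k) is the combination of H_j, j = k, ..., n, with the stated coefficients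
(the coefficient for j = n being the empty product, i.e. 1). -/
theorem stmt10 (n : ℕ) (r : Fin (n+1) → ℝ) (hr : StrictMono r) (h0 : r 0 = 0)
    (k : Fin (n+1)) (hk : 1 ≤ k.val) (t : ℝ) (ht : t ∈ Set.Ioc (0:ℝ) 1) :
    t ^ (r k) = ∑ j ∈ Finset.Ici k, (∏ i ∈ Finset.Ioi j, (1 - r k / r i)) * GB n r j t := by
  have hrpos : ∀ l : Fin (n+1), 0 < l.val → 0 < r l := by
    intro l hl
    have : (0 : Fin (n+1)) < l := by
      rw [Fin.lt_def]; simpa using hl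
    calc (0:ℝ) = r 0 := h0.symm
      _ < r l := hr this
  symm
  calc ∑ j ∈ Finset.Ici k, (∏ i ∈ Finset.Ioi j, (1 - r k / r i)) * GB n r j t
      = ∑ j ∈ Finset.Ici k, ∑ i ∈ Finset.Ici j,
          (∏ l ∈ Finset.Ioi j, (r k - r l)) / (∏ l ∈ (Finset.Ici j).erase i, (r i - r l))
            * t ^ (r i) := by
        apply Finset.sum_congr rfl
        intro j _
        rw [GB_eq, ← mul_assoc, ← mul_assoc]
        have hcoef : (∏ i ∈ Finset.Ioi j, (1 - r k / r i)) * (-1 : ℝ) ^ (n - j.val)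
            * (∏ l ∈ Finset.Ioi j, r l) = ∏ l ∈ Finset.Ioi j, (r k - r l) := by
          rw [show ((-1:ℝ)) ^ (n - j.val) = ∏ _l ∈ Finset.Ioi j, (-1:ℝ) by
            rw [Finset.prod_const]; congr 1; simp]
          rw [← Finset.prod_mul_distrib, ← Finset.prod_mul_distrib]
          apply Finset.prod_congr rfl
          intro l hl
          have hl0 : (0:ℝ) < r l := by
            apply hrpos
            have := Finset.mem_Ioi.mp hl
            rw [Fin.lt_def] at this
            omega
          field_simp
          ring
        rw [hcoef, Finset.mul_sum]
        apply Finset.sum_congr rfl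
        intro i _
        rw [div_mul_eq_mul_div, mul_div_assoc]
    _ = ∑ i ∈ Finset.Ici k, ∑ j ∈ Finset.Icc k i,
          (∏ l ∈ Finset.Ioi j, (r k - r l)) / (∏ l ∈ (Finset.Ici j).erase i, (r i - r l))
            * t ^ (r i) := swapGB_sum n k _
    _ = ∑ i ∈ Finset.Ici k, (if i = k then 1 else 0) * t ^ (r i) := by
        apply Finset.sum_congr rfl
        intro i hi
        rw [← Finset.sum_mul, innerGB_sum n r hr k i (Finset.mem_Ici.mp hi)]
    _ = t ^ (r k) := by
        simp only [ite_mul, one_mul, zero_mul]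
        rw [Finset.sum_ite_eq' (Finset.Ici k) k, if_pos (Finset.mem_Ici.mpr (le_refl k))]
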